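/- Bessel expansion of arbitrarily rotated superposed hexagon lattices: let u_H(r,θ) = (1/3)(e^{i r cos θ} + e^{i r cos(θ+2π/3)} + e^{i r cos(θ−2π/3)}). Then for every real α and all real r and θ, (1/2)·(u_H(r, θ+α) + u_H(r, θ−α)) = Σ_{k∈ℤ} i^{3k} cos(3kα) J_{3k}(r) e^{i 3k θ}, where the sum over k ∈ ℤ converges absolutely. -/

import Mathlib

/-- Bessel function of the first kind of integer order `n`, defined via the
Hansen--Bessel formula. -/
noncomputable def besselJ (n : ℤ) (r : ℝ) : ℝ :=
  ((2 * Real.pi : ℂ)⁻¹ * ∫ θ in (0:ℝ)..(2 * Real.pi),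
    Complex.exp (Complex.I * ((r * Real.cos θ - (n : ℝ) * (θ + Real.pi / 2) : ℝ) : ℂ))).re

/-- The hexagon pattern. -/
noncomputable def uH (r θ : ℝ) : ℂ :=
  (1/3) * (Complex.exp (Complex.I * ((r * Real.cos θ : ℝ) : ℂ)) +
    Complex.exp (Complex.I * ((r * Real.cos (θ + 2 * Real.pi / 3) : ℝ) : ℂ)) +
    Complex.exp (Complex.I * ((r * Real.cos (θ - 2 * Real.pi / 3) : ℝ) : ℂ)))


open Complex Real
set_option maxHeartbeats 1000000

/-- The reindexing equivalence `ℤ × ℕ ≃ ℕ × ℕ`, `(n, q) ↦ (p, p')` with `p - p' = n`. -/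
def hexEquiv : ℤ × ℕ ≃ ℕ × ℕ where
  toFun x := if 0 ≤ x.1 then (x.2 + x.1.toNat, x.2) else (x.2, x.2 + (-x.1).toNat)
  invFun y := ((y.1 : ℤ) - y.2, min y.1 y.2)
  left_inv x := by
    obtain ⟨n, q⟩ := x
    by_cases h : 0 ≤ n <;> simp [h, Prod.ext_iff] <;> omega
  right_inv y := by
    obtain ⟨p, q⟩ := y
    by_cases h : q ≤ p <;> simp [h, Prod.ext_iff] <;> omega

/-- Coefficients of the Bessel power series (times `I^|n|`). -/
noncomputable def hexCoeff (r : ℝ) (n : ℤ) (q : ℕ) : ℂ :=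
  (Complex.I * r / 2) ^ (2 * q + n.natAbs) /
    ((q.factorial : ℂ) * ((q + n.natAbs).factorial : ℂ))

/-- `I^n J_n(r)` as a power series. -/
noncomputable def Jc (n : ℤ) (r : ℝ) : ℂ := ∑' q : ℕ, hexCoeff r n q

/-- The doubly indexed expansion of `exp (I r cos ψ)`. -/
noncomputable def hexTerm (r ψ : ℝ) (x : ℕ × ℕ) : ℂ :=
  (Complex.I * r / 2 * Complex.exp (Complex.I * ψ)) ^ x.1 / (x.1.factorial : ℂ) *
    ((Complex.I * r / 2 * Complex.exp (-(Complex.I * ψ))) ^ x.2 / (x.2.factorial : ℂ))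

lemma hexTerm_apply' (r ψ : ℝ) (a b : ℕ) :
    hexTerm r ψ (a, b) = (Complex.I * r / 2) ^ (a + b) *
      Complex.exp (Complex.I * ((a : ℂ) - b) * ψ) / ((a.factorial : ℂ) * b.factorial) := by
  simp only [hexTerm]
  have e : Complex.exp ((a : ℂ) * (Complex.I * ψ)) * Complex.exp ((b : ℂ) * -(Complex.I * ψ))
      = Complex.exp (Complex.I * ((a : ℂ) - b) * ψ) := by
    rw [← Complex.exp_add]; ring_nf
  rw [mul_pow, mul_pow, ← Complex.exp_nat_mul, ← Complex.exp_nat_mul, div_mul_div_comm,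
    mul_mul_mul_comm, e, pow_add]

lemma hexTerm_equiv (r ψ : ℝ) (n : ℤ) (q : ℕ) :
    hexTerm r ψ (hexEquiv (n, q)) = hexCoeff r n q * Complex.exp (Complex.I * n * ψ) := by
  obtain h | h : 0 ≤ n ∨ n < 0 := le_or_gt 0 n
  · have h1 : hexEquiv (n, q) = (q + n.toNat, q) := by simp [hexEquiv, h]
    rw [h1, hexTerm_apply']
    have h2 : ((q + n.toNat : ℕ) : ℂ) - (q : ℂ) = (n : ℂ) := by
      have e : ((n.toNat : ℤ) : ℂ) = (n : ℂ) := by norm_cast; omega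
      push_cast at e ⊢; linear_combination e
    have h3 : q + n.toNat + q = 2 * q + n.natAbs := by omega
    have h4 : q + n.toNat = q + n.natAbs := by omega
    rw [h2, h3, h4, hexCoeff]
    ring
  · have h1 : hexEquiv (n, q) = (q, q + (-n).toNat) := by
      simp [hexEquiv, not_le.mpr h]
    rw [h1, hexTerm_apply']
    have h2 : (q : ℂ) - ((q + (-n).toNat : ℕ) : ℂ) = (n : ℂ) := by
      have e : (((-n).toNat : ℤ) : ℂ) = ((-n : ℤ) : ℂ) := by norm_cast; omega
      push_cast at e ⊢; linear_combination -e
    have h3 : q + (q + (-n).toNat) = 2 * q + n.natAbs := by omega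
    have h4 : q + (-n).toNat = q + n.natAbs := by omega
    rw [h2, h3, h4, hexCoeff]
    ring

lemma hexTerm_norm_summable (r ψ : ℝ) : Summable fun x => ‖hexTerm r ψ x‖ := by
  have h1 : Summable fun p : ℕ =>
      ‖(Complex.I * r / 2 * Complex.exp (Complex.I * ψ)) ^ p / (p.factorial : ℂ)‖ :=
    NormedSpace.norm_expSeries_div_summable _
  have h2 : Summable fun p : ℕ =>
      ‖(Complex.I * r / 2 * Complex.exp (-(Complex.I * ψ))) ^ p / (p.factorial : ℂ)‖ :=
    NormedSpace.norm_expSeries_div_summable _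
  have := (h1.mul_of_nonneg h2 (fun _ => norm_nonneg _) fun _ => norm_nonneg _)
  simpa [hexTerm, norm_mul] using this

lemma hexTerm_hasSum (r ψ : ℝ) :
    HasSum (hexTerm r ψ) (Complex.exp (Complex.I * ((r * Real.cos ψ : ℝ) : ℂ))) := by
  have h1 := NormedSpace.expSeries_div_hasSum_exp
    (Complex.I * r / 2 * Complex.exp (Complex.I * ψ))
  have h2 := NormedSpace.expSeries_div_hasSum_exp
    (Complex.I * r / 2 * Complex.exp (-(Complex.I * ψ)))
  have hm := h1.mul h2 (hexTerm_norm_summable r ψ).of_norm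
  have he : NormedSpace.exp (Complex.I * r / 2 * Complex.exp (Complex.I * ψ)) *
      NormedSpace.exp (Complex.I * r / 2 * Complex.exp (-(Complex.I * ψ)))
      = Complex.exp (Complex.I * ((r * Real.cos ψ : ℝ) : ℂ)) := by
    rw [← Complex.exp_eq_exp_ℂ, ← Complex.exp_add]
    congr 1
    have : Complex.exp (Complex.I * ψ) + Complex.exp (-(Complex.I * ψ))
        = 2 * Complex.cos ψ := by
      rw [Complex.cos]; ring_nf
    push_cast [Complex.ofReal_cos]
    linear_combination (Complex.I * r / 2) * this
  rw [← he]
  exact hm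

lemma hexTerm_norm_equiv (r : ℝ) (x : ℤ × ℕ) :
    ‖hexTerm r 0 (hexEquiv x)‖ = ‖hexCoeff r x.1 x.2‖ := by
  obtain ⟨n, q⟩ := x
  rw [hexTerm_equiv]
  simp

lemma hexCoeff_norm_summable (r : ℝ) (n : ℤ) : Summable fun q => ‖hexCoeff r n q‖ := by
  have h := ((hexEquiv.summable_iff).2 (hexTerm_norm_summable r 0)).prod_factor n
  simpa only [Function.comp_apply, hexTerm_norm_equiv] using h

lemma hexCoeff_summable (r : ℝ) (n : ℤ) : Summable (hexCoeff r n) :=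
  (hexCoeff_norm_summable r n).of_norm

lemma norm_Jc_le (r : ℝ) (n : ℤ) : ‖Jc n r‖ ≤ ∑' q, ‖hexCoeff r n q‖ :=
  norm_tsum_le_tsum_norm (hexCoeff_norm_summable r n)

lemma Jc_bound_summable (r : ℝ) : Summable fun n : ℤ => ∑' q, ‖hexCoeff r n q‖ := by
  have hg : Summable fun x : ℤ × ℕ => ‖hexTerm r 0 (hexEquiv x)‖ :=
    (hexEquiv.summable_iff).2 (hexTerm_norm_summable r 0)
  refine ⟨_, hg.hasSum.prod_fiberwise fun n => ?_⟩
  have h := (hg.prod_factor n).hasSum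
  have e : ∀ q : ℕ, ‖hexTerm r 0 (hexEquiv (n, q))‖ = ‖hexCoeff r n q‖ :=
    fun q => hexTerm_norm_equiv r (n, q)
  rw [tsum_congr e] at h
  exact h

lemma norm_Jc_summable (r : ℝ) : Summable fun n : ℤ => ‖Jc n r‖ :=
  Summable.of_nonneg_of_le (fun _ => norm_nonneg _) (fun n => norm_Jc_le r n)
    (Jc_bound_summable r)

/-- Jacobi–Anger expansion. -/
lemma Jc_hasSum (r ψ : ℝ) :
    HasSum (fun n : ℤ => Jc n r * Complex.exp (Complex.I * n * ψ))
      (Complex.exp (Complex.I * ((r * Real.cos ψ : ℝ) : ℂ))) := by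
  have Hc : HasSum (fun x : ℤ × ℕ => hexTerm r ψ (hexEquiv x))
      (Complex.exp (Complex.I * ((r * Real.cos ψ : ℝ) : ℂ))) :=
    (hexEquiv.hasSum_iff).2 (hexTerm_hasSum r ψ)
  refine Hc.prod_fiberwise fun n => ?_
  have h : HasSum (fun q => hexCoeff r n q * Complex.exp (Complex.I * n * ψ))
      (Jc n r * Complex.exp (Complex.I * n * ψ)) :=
    (hexCoeff_summable r n).hasSum.mul_right _
  simpa only [hexTerm_equiv] using h

open MeasureTheory

lemma exp_pi_div_two_mul_I : Complex.exp (Complex.I * (Real.pi / 2 : ℝ)) = Complex.I := by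
  have : Complex.I * ((Real.pi / 2 : ℝ) : ℂ) = ((Real.pi / 2 : ℝ) : ℂ) * Complex.I := by ring
  rw [this, Complex.exp_mul_I, ← Complex.ofReal_cos, ← Complex.ofReal_sin]
  simp

lemma exp_neg_n_pi_div_two (n : ℤ) :
    Complex.exp (-(Complex.I * n * (Real.pi / 2 : ℝ))) = Complex.I ^ (-n) := by
  have h1 : Complex.I ^ (-n) = Complex.exp (((-n : ℤ) : ℂ) * (Complex.I * ((Real.pi / 2 : ℝ) : ℂ))) := by
    rw [Complex.exp_int_mul, _root_.exp_pi_div_two_mul_I]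
  rw [h1]
  congr 1
  push_cast
  ring

lemma integral_exp_int (k : ℤ) :
    (∫ θ in (0:ℝ)..(2 * Real.pi), Complex.exp (Complex.I * (k : ℂ) * θ))
      = if k = 0 then (2 * Real.pi : ℂ) else 0 := by
  rcases eq_or_ne k 0 with h | h
  · simp [h]
  · have hc : (Complex.I * (k : ℂ)) ≠ 0 := by
      simp [Complex.I_ne_zero, Complex.ext_iff]
      exact_mod_cast h
    have := integral_exp_mul_complex (a := 0) (b := 2 * Real.pi) hc
    simp only [mul_assoc] at this ⊢
    rw [this]
    have h1 : Complex.I * ((k : ℂ) * ((2 * Real.pi : ℝ) : ℂ)) = (k : ℂ) * (2 * Real.pi * Complex.I) := by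
      push_cast; ring
    rw [if_neg h, h1, Complex.exp_int_mul_two_pi_mul_I]
    simp

lemma integrand_eq_tsum (n : ℤ) (r θ : ℝ) :
    Complex.exp (Complex.I * ((r * Real.cos θ - (n : ℝ) * (θ + Real.pi / 2) : ℝ) : ℂ))
      = ∑' m : ℤ, (Jc m r * Complex.I ^ (-n)) * Complex.exp (Complex.I * ((m - n : ℤ) : ℂ) * θ) := by
  have h := (Jc_hasSum r θ).mul_right
    (Complex.exp (-(Complex.I * n * θ)) * Complex.I ^ (-n))
  have e1 : ∀ m : ℤ, Jc m r * Complex.exp (Complex.I * m * θ) *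
      (Complex.exp (-(Complex.I * n * θ)) * Complex.I ^ (-n))
      = (Jc m r * Complex.I ^ (-n)) * Complex.exp (Complex.I * ((m - n : ℤ) : ℂ) * θ) := by
    intro m
    have he : Complex.exp (Complex.I * m * θ) * Complex.exp (-(Complex.I * n * θ))
        = Complex.exp (Complex.I * ((m - n : ℤ) : ℂ) * θ) := by
      rw [← Complex.exp_add]; congr 1; push_cast; ring
    calc Jc m r * Complex.exp (Complex.I * m * θ) *
        (Complex.exp (-(Complex.I * n * θ)) * Complex.I ^ (-n))
        = Jc m r * Complex.I ^ (-n) *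
          (Complex.exp (Complex.I * m * θ) * Complex.exp (-(Complex.I * n * θ))) := by ring
      _ = _ := by rw [he]
  have e2 : Complex.exp (Complex.I * ((r * Real.cos θ : ℝ) : ℂ)) *
      (Complex.exp (-(Complex.I * n * θ)) * Complex.I ^ (-n))
      = Complex.exp (Complex.I * ((r * Real.cos θ - (n : ℝ) * (θ + Real.pi / 2) : ℝ) : ℂ)) := by
    rw [← exp_neg_n_pi_div_two n, ← Complex.exp_add, ← Complex.exp_add]
    congr 1
    push_cast
    ring
  simp_rw [e1, e2] at h
  exact h.tsum_eq.symm

lemma integral_integrand (n : ℤ) (r : ℝ) :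
    (∫ θ in (0:ℝ)..(2 * Real.pi),
      Complex.exp (Complex.I * ((r * Real.cos θ - (n : ℝ) * (θ + Real.pi / 2) : ℝ) : ℂ)))
      = (2 * Real.pi : ℂ) * (Jc n r * Complex.I ^ (-n)) := by
  set g : ℤ → ℝ → ℂ := fun m θ =>
    (Jc m r * Complex.I ^ (-n)) * Complex.exp (Complex.I * ((m - n : ℤ) : ℂ) * θ) with hg
  have h2pi : (0:ℝ) ≤ 2 * Real.pi := by positivity
  have hnormg : ∀ m θ, ‖g m θ‖ = ‖Jc m r‖ := by
    intro m θ
    rw [hg]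
    simp only [norm_mul, Complex.norm_exp, norm_zpow, Complex.norm_I,
      one_zpow]
    have : (Complex.I * ((m - n : ℤ) : ℂ) * (θ : ℂ)).re = 0 := by simp
    rw [this]
    simp
  have hswap : (∫ θ in Set.Ioc (0:ℝ) (2 * Real.pi), ∑' m : ℤ, g m θ)
      = ∑' m : ℤ, ∫ θ in Set.Ioc (0:ℝ) (2 * Real.pi), g m θ := by
    refine MeasureTheory.integral_tsum (fun m => ?_) ?_
    · exact (Continuous.aestronglyMeasurable (by continuity))
    · have hsum := norm_Jc_summable r
      have : ∀ m : ℤ, ∫⁻ θ in Set.Ioc (0:ℝ) (2 * Real.pi), ‖g m θ‖₊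
          = (‖Jc m r‖₊ : ENNReal) * ENNReal.ofReal (2 * Real.pi) := by
        intro m
        have : ∀ θ : ℝ, (‖g m θ‖₊ : ENNReal) = (‖Jc m r‖₊ : ENNReal) := by
          intro θ
          congr 1
          ext
          exact hnormg m θ
        simp_rw [this]
        rw [MeasureTheory.lintegral_const]
        simp [Real.volume_Ioc]
      simp_rw [enorm_eq_nnnorm, this]
      rw [ENNReal.tsum_mul_right]
      refine ENNReal.mul_ne_top ?_ ENNReal.ofReal_ne_top
      rw [ENNReal.tsum_coe_ne_top_iff_summable]
      rw [← NNReal.summable_coe]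
      simpa using hsum
  have hint : ∀ m : ℤ, (∫ θ in Set.Ioc (0:ℝ) (2 * Real.pi), g m θ)
      = if m = n then (2 * Real.pi : ℂ) * (Jc n r * Complex.I ^ (-n)) else 0 := by
    intro m
    rw [← intervalIntegral.integral_of_le h2pi, hg]
    simp only
    rw [intervalIntegral.integral_const_mul, integral_exp_int (m - n)]
    rcases eq_or_ne m n with h | h
    · simp [h]; ring
    · simp [sub_eq_zero, h]
  calc (∫ θ in (0:ℝ)..(2 * Real.pi),
      Complex.exp (Complex.I * ((r * Real.cos θ - (n : ℝ) * (θ + Real.pi / 2) : ℝ) : ℂ)))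
      = ∫ θ in Set.Ioc (0:ℝ) (2 * Real.pi), ∑' m : ℤ, g m θ := by
        rw [intervalIntegral.integral_of_le h2pi]
        refine MeasureTheory.setIntegral_congr_fun measurableSet_Ioc (fun θ _ => ?_)
        exact integrand_eq_tsum n r θ
    _ = ∑' m : ℤ, ∫ θ in Set.Ioc (0:ℝ) (2 * Real.pi), g m θ := hswap
    _ = (2 * Real.pi : ℂ) * (Jc n r * Complex.I ^ (-n)) := by
        simp_rw [hint]
        exact tsum_ite_eq n _

lemma neg_one_zpow_eq (n : ℤ) : ((-1 : ℂ)) ^ n = ((-1 : ℂ)) ^ n.natAbs := by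
  rcases Int.even_or_odd n with h | h
  · rw [h.neg_one_zpow, (Int.natAbs_even.mpr h).neg_one_pow]
  · rw [h.neg_one_zpow, (Int.natAbs_odd.mpr h).neg_one_pow]

lemma conj_Jc (n : ℤ) (r : ℝ) :
    (starRingEnd ℂ) (Jc n r) = (-1 : ℂ) ^ n.natAbs * Jc n r := by
  simp only [Jc]
  rw [← Complex.star_def, tsum_star, ← tsum_mul_left]
  refine tsum_congr fun q => ?_
  rw [Complex.star_def, hexCoeff]
  simp only [map_div₀, map_pow, map_mul, Complex.conj_I, Complex.conj_ofReal, map_ofNat,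
    map_natCast]
  have : (-Complex.I * (r : ℂ) / 2) ^ (2 * q + n.natAbs)
      = (-1 : ℂ) ^ n.natAbs * (Complex.I * (r : ℂ) / 2) ^ (2 * q + n.natAbs) := by
    rw [show (-Complex.I * (r : ℂ) / 2) = (-1) * (Complex.I * (r : ℂ) / 2) by ring, mul_pow,
      pow_add, pow_mul, neg_one_sq, one_pow, one_mul]
  rw [this]
  ring

lemma conj_W (n : ℤ) (r : ℝ) :
    (starRingEnd ℂ) (Jc n r * Complex.I ^ (-n)) = Jc n r * Complex.I ^ (-n) := by
  rw [map_mul, conj_Jc, map_zpow₀, Complex.conj_I]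
  have h1 : (-Complex.I) ^ (-n) = (-1 : ℂ) ^ (-n) * Complex.I ^ (-n) := by
    rw [show -Complex.I = (-1) * Complex.I by ring, mul_zpow]
  rw [h1, neg_one_zpow_eq (-n), Int.natAbs_neg]
  have h2 : ((-1 : ℂ)) ^ n.natAbs * ((-1 : ℂ)) ^ n.natAbs = 1 := by
    rw [← pow_add, ← two_mul, pow_mul]
    norm_num
  calc (-1 : ℂ) ^ n.natAbs * Jc n r * ((-1 : ℂ) ^ n.natAbs * Complex.I ^ (-n))
      = ((-1 : ℂ) ^ n.natAbs * ((-1 : ℂ)) ^ n.natAbs) * (Jc n r * Complex.I ^ (-n)) := by ring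
    _ = _ := by rw [h2, one_mul]

lemma besselJ_eq (n : ℤ) (r : ℝ) :
    ((besselJ n r : ℝ) : ℂ) = Jc n r * Complex.I ^ (-n) := by
  have hπ : (2 * Real.pi : ℂ) ≠ 0 := by
    simp [Complex.ext_iff, Real.pi_ne_zero]
  rw [besselJ, integral_integrand, ← mul_assoc, inv_mul_cancel₀ hπ, one_mul]
  exact Complex.conj_eq_iff_re.mp (conj_W n r)

lemma I_zpow_mul_besselJ (n : ℤ) (r : ℝ) :
    Complex.I ^ n * ((besselJ n r : ℝ) : ℂ) = Jc n r := by
  rw [besselJ_eq, zpow_neg, ← mul_assoc, mul_comm (Complex.I ^ n) (Jc n r), mul_assoc,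
    mul_inv_cancel₀ (zpow_ne_zero n Complex.I_ne_zero), mul_one]

lemma root3 (n : ℤ) (h : ¬ (3:ℤ) ∣ n) :
    1 + Complex.exp (Complex.I * n * ((2 * Real.pi / 3 : ℝ) : ℂ)) +
      Complex.exp (-(Complex.I * n * ((2 * Real.pi / 3 : ℝ) : ℂ))) = 0 := by
  set z : ℂ := Complex.I * n * ((2 * Real.pi / 3 : ℝ) : ℂ) with hz
  set x : ℂ := Complex.exp z with hx
  have hx0 : x ≠ 0 := Complex.exp_ne_zero z
  have hx3 : x ^ 3 = 1 := by
    rw [hx, ← Complex.exp_nat_mul]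
    rw [show ((3:ℕ):ℂ) * z = (n : ℂ) * (2 * Real.pi * Complex.I) by rw [hz]; push_cast; ring]
    exact Complex.exp_int_mul_two_pi_mul_I n
  have hx1 : x ≠ 1 := by
    intro hc
    obtain ⟨m, hm⟩ := Complex.exp_eq_one_iff.mp (hx ▸ hc)
    rw [hz] at hm
    have hc2 : ((n : ℂ) * ((2 * Real.pi / 3 : ℝ) : ℂ)) * Complex.I
        = ((m : ℂ) * (2 * (Real.pi : ℂ))) * Complex.I := by linear_combination hm
    have hc3 := mul_right_cancel₀ Complex.I_ne_zero hc2
    have hreal : (n : ℝ) * (2 * Real.pi / 3) = (m : ℝ) * (2 * Real.pi) := by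
      exact_mod_cast hc3
    have h3 : (n : ℝ) * (2 * Real.pi) = (3 * (m : ℝ)) * (2 * Real.pi) := by
      linear_combination 3 * hreal
    have h4 : (n : ℝ) = 3 * (m : ℝ) :=
      mul_right_cancel₀ (by positivity : (0:ℝ) < 2 * Real.pi).ne' h3
    exact h ⟨m, by exact_mod_cast h4⟩
  have hquad : x ^ 2 + x + 1 = 0 := by
    have hfac : (x - 1) * (x ^ 2 + x + 1) = 0 := by linear_combination hx3
    rcases mul_eq_zero.mp hfac with h1 | h1
    · exact absurd (sub_eq_zero.mp h1) hx1
    · exact h1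
  have hinv : Complex.exp (-z) = x⁻¹ := by rw [Complex.exp_neg, hx]
  rw [hinv]
  field_simp
  linear_combination hquad

lemma hasSum_G (r ψ : ℝ) :
    HasSum (fun n : ℤ => if (3:ℤ) ∣ n then Jc n r * Complex.exp (Complex.I * n * ψ) else 0)
      (uH r ψ) := by
  have h1 := Jc_hasSum r ψ
  have h2 := Jc_hasSum r (ψ + 2 * Real.pi / 3)
  have h3 := Jc_hasSum r (ψ - 2 * Real.pi / 3)
  have H := ((h1.add h2).add h3).mul_left (1/3 : ℂ)
  have hfun : ∀ n : ℤ,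
      (1/3 : ℂ) * (Jc n r * Complex.exp (Complex.I * n * ψ) +
        Jc n r * Complex.exp (Complex.I * n * ((ψ + 2 * Real.pi / 3 : ℝ) : ℂ)) +
        Jc n r * Complex.exp (Complex.I * n * ((ψ - 2 * Real.pi / 3 : ℝ) : ℂ)))
      = if (3:ℤ) ∣ n then Jc n r * Complex.exp (Complex.I * n * ψ) else 0 := by
    intro n
    have e1 : Complex.exp (Complex.I * n * ((ψ + 2 * Real.pi / 3 : ℝ) : ℂ))
        = Complex.exp (Complex.I * n * ψ) *
          Complex.exp (Complex.I * n * ((2 * Real.pi / 3 : ℝ) : ℂ)) := by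
      rw [← Complex.exp_add]; congr 1; push_cast; ring
    have e2 : Complex.exp (Complex.I * n * ((ψ - 2 * Real.pi / 3 : ℝ) : ℂ))
        = Complex.exp (Complex.I * n * ψ) *
          Complex.exp (-(Complex.I * n * ((2 * Real.pi / 3 : ℝ) : ℂ))) := by
      rw [← Complex.exp_add]; congr 1; push_cast; ring
    rw [e1, e2]
    rcases em ((3:ℤ) ∣ n) with hd | hd
    · rw [if_pos hd]
      obtain ⟨k, hk⟩ := hd
      have hone : Complex.exp (Complex.I * n * ((2 * Real.pi / 3 : ℝ) : ℂ)) = 1 := by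
        rw [show Complex.I * (n : ℂ) * ((2 * Real.pi / 3 : ℝ) : ℂ)
            = (k : ℂ) * (2 * Real.pi * Complex.I) by rw [hk]; push_cast; ring]
        exact Complex.exp_int_mul_two_pi_mul_I k
      rw [hone]
      simp only [Complex.exp_neg, hone]
      norm_num
      ring
    · rw [if_neg hd]
      have h0 := root3 n hd
      linear_combination (1/3 : ℂ) * Jc n r * Complex.exp (Complex.I * n * ψ) * h0
  rw [funext hfun] at H
  rw [uH]
  exact H

lemma hasSum_uH3 (r ψ : ℝ) :
    HasSum (fun k : ℤ => Jc (3 * k) r * Complex.exp (Complex.I * ((3 * k : ℤ) : ℂ) * ψ))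
      (uH r ψ) := by
  have hinj : Function.Injective (fun k : ℤ => (3 : ℤ) * k) := fun a b hab => by
    simp only at hab; omega
  have h0 : ∀ n : ℤ, n ∉ Set.range (fun k : ℤ => 3 * k) →
      (if (3:ℤ) ∣ n then Jc n r * Complex.exp (Complex.I * n * ψ) else 0) = 0 := by
    intro n hn
    rw [if_neg]
    intro ⟨k, hk⟩
    exact hn ⟨k, by show (3:ℤ) * k = n; omega⟩
  have := (hinj.hasSum_iff h0).mpr (hasSum_G r ψ)
  have heq : ∀ k : ℤ, ((fun n : ℤ => if (3:ℤ) ∣ n then Jc n r * Complex.exp (Complex.I * n * ψ)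
      else 0) ∘ fun k : ℤ => (3:ℤ) * k) k
      = Jc (3 * k) r * Complex.exp (Complex.I * ((3 * k : ℤ) : ℂ) * ψ) := by
    intro k
    simp [Dvd.intro k rfl]
  rw [funext heq] at this
  exact this

lemma term_eq (α r θ : ℝ) (k : ℤ) :
    Complex.I ^ (3 * k) * ((Real.cos (3 * (k : ℝ) * α) : ℝ) : ℂ) *
      ((besselJ (3 * k) r : ℝ) : ℂ) * Complex.exp (Complex.I * (3 * (k : ℂ) * (θ : ℂ)))
    = (1/2 : ℂ) * (Jc (3 * k) r *
        Complex.exp (Complex.I * ((3 * k : ℤ) : ℂ) * ((θ + α : ℝ) : ℂ)) +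
      Jc (3 * k) r * Complex.exp (Complex.I * ((3 * k : ℤ) : ℂ) * ((θ - α : ℝ) : ℂ))) := by
  have hJ := I_zpow_mul_besselJ (3 * k) r
  have hcos : ((Real.cos (3 * (k : ℝ) * α) : ℝ) : ℂ)
      = (Complex.exp (Complex.I * (3 * (k : ℂ)) * α) +
        Complex.exp (-(Complex.I * (3 * (k : ℂ)) * α))) / 2 := by
    rw [Complex.ofReal_cos, Complex.cos]
    push_cast
    ring_nf
  have he1 : Complex.exp (Complex.I * ((3 * k : ℤ) : ℂ) * ((θ + α : ℝ) : ℂ))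
      = Complex.exp (Complex.I * (3 * (k : ℂ)) * θ) *
        Complex.exp (Complex.I * (3 * (k : ℂ)) * α) := by
    rw [← Complex.exp_add]; congr 1; push_cast; ring
  have he2 : Complex.exp (Complex.I * ((3 * k : ℤ) : ℂ) * ((θ - α : ℝ) : ℂ))
      = Complex.exp (Complex.I * (3 * (k : ℂ)) * θ) *
        Complex.exp (-(Complex.I * (3 * (k : ℂ)) * α)) := by
    rw [← Complex.exp_add]; congr 1; push_cast; ring
  have he0 : Complex.I * (3 * (k : ℂ) * (θ : ℂ)) = Complex.I * (3 * (k : ℂ)) * θ := by ring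
  rw [he0, hcos, he1, he2, ← hJ]
  ring

/-- Bessel expansion of the superposition of two hexagon lattices rotated by `±α`. -/
theorem rotated_hexagons_bessel_expansion (α r θ : ℝ) :
    Summable (fun k : ℤ => Complex.I ^ (3 * k) * ((Real.cos (3 * (k : ℝ) * α) : ℝ) : ℂ) *
      (besselJ (3 * k) r : ℂ) * Complex.exp (Complex.I * (3 * (k : ℂ) * (θ : ℂ)))) ∧
    (∑' k : ℤ, Complex.I ^ (3 * k) * ((Real.cos (3 * (k : ℝ) * α) : ℝ) : ℂ) *
      (besselJ (3 * k) r : ℂ) * Complex.exp (Complex.I * (3 * (k : ℂ) * (θ : ℂ))))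
      = (1/2) * (uH r (θ + α) + uH r (θ - α)) := by
  have H := ((hasSum_uH3 r (θ + α)).add (hasSum_uH3 r (θ - α))).mul_left (1/2 : ℂ)
  rw [← funext (term_eq α r θ)] at H
  exact ⟨H.summable, H.tsum_eq⟩
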